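/- Let σ: ℝ^L → ℝ^L be odd, i.e. σ(−x) = −σ(x) for all x. Consider the reparameterized population risk on the manifold Ẽ_σ(m_k, m_v, R_k, R_v) = E_{ε,χ,ξ} g(ε,χ)[1 − 2 m_v σ(m_k χ + R_k ξ)_ε + (m_v² + R_v²) ‖σ(m_k χ + R_k ξ)‖²], with ε uniform on {1,...,L} and χ, ξ ~ N(0, I_L) independent, for any measurable positive weight g with E g = 1. Then the partial derivatives of Ẽ_σ with respect to m_k and m_v both vanish at (m_k, m_v, R_k, R_v) = (0, 0, 1, 1). -/

import Mathlib

open MeasureTheory ProbabilityTheory Real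

noncomputable def stdGaussian (L : ℕ) : Measure (Fin L → ℝ) :=
  Measure.pi fun _ => gaussianReal 0 1

/-- Reparameterized population risk on the manifold:
`Ẽ_σ(m_k, m_v, R_k, R_v) = E_{ε,χ,ξ} g(ε,χ)[1 − 2 m_v σ(m_k χ + R_k ξ)_ε
  + (m_v² + R_v²) ‖σ(m_k χ + R_k ξ)‖²]`. -/
noncomputable def Etil (L : ℕ) (g : Fin L → (Fin L → ℝ) → ℝ)
    (σ : (Fin L → ℝ) → (Fin L → ℝ)) (mk mv Rk Rv : ℝ) : ℝ :=
  (L : ℝ)⁻¹ * ∑ ε : Fin L, ∫ χ, ∫ ξ,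
    g ε χ * (1 - 2 * mv * σ (fun ℓ => mk * χ ℓ + Rk * ξ ℓ) ε
      + (mv ^ 2 + Rv ^ 2) * ∑ ℓ, σ (fun ℓ' => mk * χ ℓ' + Rk * ξ ℓ') ℓ ^ 2)
    ∂stdGaussian L ∂stdGaussian L

lemma neg_mp (L : ℕ) : MeasurePreserving (fun x : Fin L → ℝ => -x)
    (stdGaussian L) (stdGaussian L) := by
  have h1 : MeasurePreserving (fun x : ℝ => -x) (gaussianReal 0 1) (gaussianReal 0 1) := by
    constructor
    · exact measurable_neg
    · have := gaussianReal_map_const_mul (μ := 0) (v := 1) (-1)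
      simpa [neg_one_mul] using this
  have := measurePreserving_pi _ _ (fun _ : Fin L => h1)
  simp only [_root_.stdGaussian]; exact this

lemma integral_neg_comp (L : ℕ) (f : (Fin L → ℝ) → ℝ) :
    ∫ ξ, f (-ξ) ∂stdGaussian L = ∫ ξ, f ξ ∂stdGaussian L :=
  (neg_mp L).integral_comp (MeasurableEquiv.neg _).measurableEmbedding f

lemma deriv_even {f : ℝ → ℝ} (hf : ∀ x, f (-x) = f x) : deriv f 0 = 0 := by
  have h : deriv (fun x => f (-x)) 0 = -deriv f (-0) := deriv_comp_neg f 0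
  simp only [funext hf, neg_zero] at h
  linarith

/-- for an odd activation `σ` the partial derivatives of the
reparameterized risk with respect to `m_k` and `m_v` both vanish at
`(m_k, m_v, R_k, R_v) = (0, 0, 1, 1)`. -/
theorem stmt12 (L : ℕ) (hL : 1 ≤ L)
    (σ : (Fin L → ℝ) → (Fin L → ℝ))
    (hσ_meas : Measurable σ)
    (hσ_odd : ∀ x : Fin L → ℝ, σ (-x) = -σ x)
    (g : Fin L → (Fin L → ℝ) → ℝ)
    (hg_pos : ∀ ε χ, 0 < g ε χ)
    (hg_meas : ∀ ε, Measurable (g ε))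
    (hg_norm : (L : ℝ)⁻¹ * ∑ ε, ∫ χ, g ε χ ∂stdGaussian L = 1) :
    deriv (fun mk => Etil L g σ mk 0 1 1) 0 = 0 ∧
    deriv (fun mv => Etil L g σ 0 mv 1 1) 0 = 0 := by
  refine ⟨deriv_even fun m => ?_, deriv_even fun m => ?_⟩
  · show Etil L g σ (-m) 0 1 1 = Etil L g σ m 0 1 1
    unfold Etil
    congr 1
    refine Finset.sum_congr rfl fun ε _ => ?_
    refine integral_congr_ae (Filter.Eventually.of_forall fun χ => ?_)
    have key : ∀ ξ : Fin L → ℝ,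
        g ε χ * (1 - 2 * 0 * σ (fun ℓ => (-m) * χ ℓ + 1 * ξ ℓ) ε
          + ((0:ℝ) ^ 2 + 1 ^ 2) * ∑ ℓ, σ (fun ℓ' => (-m) * χ ℓ' + 1 * ξ ℓ') ℓ ^ 2)
        = (fun ξ => g ε χ * (1 - 2 * 0 * σ (fun ℓ => m * χ ℓ + 1 * ξ ℓ) ε
          + ((0:ℝ) ^ 2 + 1 ^ 2) * ∑ ℓ, σ (fun ℓ' => m * χ ℓ' + 1 * ξ ℓ') ℓ ^ 2)) (-ξ) := by
      intro ξ
      have harg : (fun ℓ' => m * χ ℓ' + 1 * (-ξ) ℓ')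
          = -(fun ℓ' => (-m) * χ ℓ' + 1 * ξ ℓ') := by
        funext ℓ'; simp; ring
      have h2 : σ (fun ℓ' => m * χ ℓ' + 1 * (-ξ) ℓ')
          = -σ (fun ℓ' => (-m) * χ ℓ' + 1 * ξ ℓ') := by rw [harg, hσ_odd]
      show _ = g ε χ * (1 - 2 * 0 * σ (fun ℓ => m * χ ℓ + 1 * (-ξ) ℓ) ε
          + ((0:ℝ) ^ 2 + 1 ^ 2) * ∑ ℓ, σ (fun ℓ' => m * χ ℓ' + 1 * (-ξ) ℓ') ℓ ^ 2)
      rw [h2]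
      simp only [Pi.neg_apply, neg_sq]
      ring
    calc _ = ∫ ξ, (fun ξ => g ε χ * (1 - 2 * 0 * σ (fun ℓ => m * χ ℓ + 1 * ξ ℓ) ε
          + ((0:ℝ) ^ 2 + 1 ^ 2) * ∑ ℓ, σ (fun ℓ' => m * χ ℓ' + 1 * ξ ℓ') ℓ ^ 2)) (-ξ)
          ∂stdGaussian L := integral_congr_ae (Filter.Eventually.of_forall key)
      _ = _ := integral_neg_comp L (fun ξ => g ε χ * (1 - 2 * 0 * σ (fun ℓ => m * χ ℓ + 1 * ξ ℓ) ε
          + ((0:ℝ) ^ 2 + 1 ^ 2) * ∑ ℓ, σ (fun ℓ' => m * χ ℓ' + 1 * ξ ℓ') ℓ ^ 2))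
  · show Etil L g σ 0 (-m) 1 1 = Etil L g σ 0 m 1 1
    unfold Etil
    congr 1
    refine Finset.sum_congr rfl fun ε _ => ?_
    refine integral_congr_ae (Filter.Eventually.of_forall fun χ => ?_)
    have key : ∀ ξ : Fin L → ℝ,
        g ε χ * (1 - 2 * (-m) * σ (fun ℓ => 0 * χ ℓ + 1 * ξ ℓ) ε
          + ((-m) ^ 2 + 1 ^ 2) * ∑ ℓ, σ (fun ℓ' => 0 * χ ℓ' + 1 * ξ ℓ') ℓ ^ 2)
        = (fun ξ => g ε χ * (1 - 2 * m * σ (fun ℓ => 0 * χ ℓ + 1 * ξ ℓ) ε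
          + (m ^ 2 + 1 ^ 2) * ∑ ℓ, σ (fun ℓ' => 0 * χ ℓ' + 1 * ξ ℓ') ℓ ^ 2)) (-ξ) := by
      intro ξ
      have harg : (fun ℓ' => 0 * χ ℓ' + 1 * (-ξ) ℓ')
          = -(fun ℓ' => 0 * χ ℓ' + 1 * ξ ℓ') := by
        funext ℓ'; simp
      have h2 : σ (fun ℓ' => 0 * χ ℓ' + 1 * (-ξ) ℓ')
          = -σ (fun ℓ' => 0 * χ ℓ' + 1 * ξ ℓ') := by rw [harg, hσ_odd]
      show _ = g ε χ * (1 - 2 * m * σ (fun ℓ => 0 * χ ℓ + 1 * (-ξ) ℓ) ε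
          + (m ^ 2 + 1 ^ 2) * ∑ ℓ, σ (fun ℓ' => 0 * χ ℓ' + 1 * (-ξ) ℓ') ℓ ^ 2)
      rw [h2]
      simp only [Pi.neg_apply, neg_sq]
      ring
    calc _ = ∫ ξ, (fun ξ => g ε χ * (1 - 2 * m * σ (fun ℓ => 0 * χ ℓ + 1 * ξ ℓ) ε
          + (m ^ 2 + 1 ^ 2) * ∑ ℓ, σ (fun ℓ' => 0 * χ ℓ' + 1 * ξ ℓ') ℓ ^ 2)) (-ξ)
          ∂stdGaussian L := integral_congr_ae (Filter.Eventually.of_forall key)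
      _ = _ := integral_neg_comp L (fun ξ => g ε χ * (1 - 2 * m * σ (fun ℓ => 0 * χ ℓ + 1 * ξ ℓ) ε
          + (m ^ 2 + 1 ^ 2) * ∑ ℓ, σ (fun ℓ' => 0 * χ ℓ' + 1 * ξ ℓ') ℓ ^ 2))
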